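/- Let b = 5·2^n with n ≥ 2, and let x be an integer with 1 ≤ x ≤ b − 1 such that 2^n does not divide x. If (u, v) is a base-b difference pair and L ≥ 0 satisfies K^L(u, v) = (x, 0), then L ≤ n + 1. -/
import Mathlib


/-- The four base-`b` digits of `x` (viewed as a 4-digit string with leading
zeros allowed), sorted in decreasing order. -/
def sortedDigits (b x : ℕ) : List ℕ :=
  List.insertionSort (· ≥ ·) [x % b, x / b % b, x / b ^ 2 % b, x / b ^ 3 % b]

/-- The 4-digit base-`b` Kaprekar function `K_b(x) = D - A`. -/
def Kap (b x : ℕ) : ℕ :=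
  let l := sortedDigits b x
  (l[0]! * b ^ 3 + l[1]! * b ^ 2 + l[2]! * b + l[3]!) -
    (l[3]! * b ^ 3 + l[2]! * b ^ 2 + l[1]! * b + l[0]!)

/-- The difference pair `(a₃ - a₀, a₂ - a₁)` of a 4-digit base-`b` input. -/
def diffPair (b x : ℕ) : ℕ × ℕ :=
  let l := sortedDigits b x
  (l[0]! - l[3]!, l[1]! - l[2]!)

/-- `S_b`: the set of 4-digit base-`b` inputs whose sequence of Kaprekar
iterates is eventually constant and nonzero. -/
def KapSet (b : ℕ) : Set ℕ :=
  {x | x < b ^ 4 ∧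
    ∃ t, (∀ s, t ≤ s → (Kap b)^[s] x = (Kap b)^[t] x) ∧ (Kap b)^[t] x ≠ 0}

/-- Arrange the two coordinates of a pair in decreasing order. -/
def sort2 (p : ℕ × ℕ) : ℕ × ℕ := (max p.1 p.2, min p.1 p.2)

/-- A base-`b` difference pair: `b - 1 ≥ d ≥ d' ≥ 0`. -/
def IsDiffPair (b : ℕ) (p : ℕ × ℕ) : Prop := p.2 ≤ p.1 ∧ p.1 ≤ b - 1

/-- The Kaprekar map on base-`b` difference pairs. -/
def Kpair (b : ℕ) (p : ℕ × ℕ) : ℕ × ℕ :=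
  if p.1 = 0 ∧ p.2 = 0 then (0, 0)
  else if p.2 = 0 then
    -- type (c)
    sort2 (p.1 - 1, b - p.1)
  else if p.1 = p.2 ∨ p.1 + p.2 = b then
    -- type (b)
    sort2 ((2 * (p.1 : ℤ) - ((b : ℤ) - 1)).natAbs,
           (2 * (p.1 : ℤ) - ((b : ℤ) + 1)).natAbs)
  else
    -- type (a)
    sort2 ((2 * (p.1 : ℤ) - (b : ℤ)).natAbs, (2 * (p.2 : ℤ) - (b : ℤ)).natAbs)

namespace KapAux

/-- a special coordinate of level `j`: an odd multiple of `5·2^(n-j)`. -/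
def Sp (n j c : ℕ) : Prop := ∃ m, Odd m ∧ c = 5 * 2 ^ (n - j) * m

lemma sp_pos {n j c : ℕ} (h : Sp n j c) : 0 < c := by
  obtain ⟨m, hm, rfl⟩ := h
  have : 0 < m := hm.pos
  positivity

lemma sp_five {n j c : ℕ} (h : Sp n j c) : 5 ∣ c := by
  obtain ⟨m, hm, rfl⟩ := h; exact ⟨2 ^ (n - j) * m, by ring⟩

lemma sp_even {n j c : ℕ} (hj : j < n) (h : Sp n j c) : Even c := by
  obtain ⟨m, hm, rfl⟩ := h
  obtain ⟨t, ht⟩ : ∃ t, n - j = t + 1 := ⟨n - j - 1, by omega⟩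
  exact ⟨5 * 2 ^ t * m, by rw [ht]; ring⟩

lemma sp_odd {n c : ℕ} (h : Sp n n c) : Odd c := by
  obtain ⟨m, hm, rfl⟩ := h
  rw [Nat.sub_self, pow_zero, mul_one]
  exact (Nat.odd_iff.mpr rfl).mul hm

lemma sort2_cases (a c : ℕ) : sort2 (a, c) = (a, c) ∨ sort2 (a, c) = (c, a) := by
  rcases le_total c a with h | h
  · left; simp [sort2, max_eq_left h, min_eq_right h]
  · right; simp [sort2, max_eq_right h, min_eq_left h]

lemma Kpair_inv (b : ℕ) (r q : ℕ × ℕ) (h : Kpair b r = q) :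
    (r = (0, 0) ∧ q = (0, 0)) ∨
    (r.2 = 0 ∧ r.1 ≠ 0 ∧ (q = (r.1 - 1, b - r.1) ∨ q = (b - r.1, r.1 - 1))) ∨
    (r.2 ≠ 0 ∧
      (q = ((2 * (r.1 : ℤ) - ((b : ℤ) - 1)).natAbs, (2 * (r.1 : ℤ) - ((b : ℤ) + 1)).natAbs) ∨
       q = ((2 * (r.1 : ℤ) - ((b : ℤ) + 1)).natAbs, (2 * (r.1 : ℤ) - ((b : ℤ) - 1)).natAbs))) ∨
    (r.2 ≠ 0 ∧
      (q = ((2 * (r.1 : ℤ) - (b : ℤ)).natAbs, (2 * (r.2 : ℤ) - (b : ℤ)).natAbs) ∨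
       q = ((2 * (r.2 : ℤ) - (b : ℤ)).natAbs, (2 * (r.1 : ℤ) - (b : ℤ)).natAbs))) := by
  unfold Kpair at h
  split_ifs at h with h1 h2 h3
  · exact Or.inl ⟨Prod.ext h1.1 h1.2, h.symm⟩
  · refine Or.inr (Or.inl ⟨h2, fun h0 => h1 ⟨h0, h2⟩, ?_⟩)
    rcases sort2_cases (r.1 - 1) (b - r.1) with hs | hs <;> rw [← h, hs]
    · exact Or.inl rfl
    · exact Or.inr rfl
  · refine Or.inr (Or.inr (Or.inl ⟨h2, ?_⟩))
    rcases sort2_cases ((2 * (r.1 : ℤ) - ((b : ℤ) - 1)).natAbs)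
      ((2 * (r.1 : ℤ) - ((b : ℤ) + 1)).natAbs) with hs | hs <;> rw [← h, hs]
    · exact Or.inl rfl
    · exact Or.inr rfl
  · refine Or.inr (Or.inr (Or.inr ⟨h2, ?_⟩))
    rcases sort2_cases ((2 * (r.1 : ℤ) - (b : ℤ)).natAbs)
      ((2 * (r.2 : ℤ) - (b : ℤ)).natAbs) with hs | hs <;> rw [← h, hs]
    · exact Or.inl rfl
    · exact Or.inr rfl

lemma isDiffPair_sort2 {b a c : ℕ} (ha : a ≤ b - 1) (hc : c ≤ b - 1) :
    IsDiffPair b (sort2 (a, c)) :=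
  ⟨min_le_max, max_le ha hc⟩

lemma kpair_diff {b : ℕ} {p : ℕ × ℕ} (hp : IsDiffPair b p) : IsDiffPair b (Kpair b p) := by
  obtain ⟨h1, h2⟩ := hp
  unfold Kpair
  split_ifs with c1 c2 c3
  · exact ⟨le_refl 0, Nat.zero_le _⟩
  · exact isDiffPair_sort2 (by omega) (by omega)
  · exact isDiffPair_sort2 (by omega) (by omega)
  · exact isDiffPair_sort2 (by omega) (by omega)

lemma iterate_diff {b : ℕ} {p : ℕ × ℕ} (hp : IsDiffPair b p) (L : ℕ) :
    IsDiffPair b ((Kpair b)^[L] p) := by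
  induction L with
  | zero => exact hp
  | succ L ih => rw [Function.iterate_succ_apply']; exact kpair_diff ih


lemma bsplit {n : ℕ} (hn : 1 ≤ n) : ((5 * 2 ^ n : ℕ) : ℤ) = 2 * (5 * 2 ^ (n - 1)) := by
  obtain ⟨t, ht⟩ : ∃ t, n = t + 1 := ⟨n - 1, by omega⟩
  subst ht
  push_cast
  ring

lemma even_out {n : ℕ} (hn : 1 ≤ n) (r : ℕ) :
    Even ((2 * (r : ℤ) - ((5 * 2 ^ n : ℕ) : ℤ)).natAbs) := by
  rw [Int.natAbs_even]
  exact ⟨(r : ℤ) - 5 * 2 ^ (n - 1), by rw [bsplit hn]; ring⟩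

lemma odd_b1 {n : ℕ} (hn : 1 ≤ n) (r : ℕ) :
    Odd ((2 * (r : ℤ) - (((5 * 2 ^ n : ℕ) : ℤ) - 1)).natAbs) := by
  rw [Int.natAbs_odd]
  exact ⟨(r : ℤ) - 5 * 2 ^ (n - 1), by rw [bsplit hn]; ring⟩

lemma odd_b2 {n : ℕ} (hn : 1 ≤ n) (r : ℕ) :
    Odd ((2 * (r : ℤ) - (((5 * 2 ^ n : ℕ) : ℤ) + 1)).natAbs) := by
  rw [Int.natAbs_odd]
  exact ⟨(r : ℤ) - 5 * 2 ^ (n - 1) - 1, by rw [bsplit hn]; ring⟩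

lemma five_dvd_of {n r : ℕ} (h : 5 ∣ (2 * (r : ℤ) - ((5 * 2 ^ n : ℕ) : ℤ)).natAbs) :
    5 ∣ r := by
  have h1 : (5 : ℤ) ∣ (2 * (r : ℤ) - ((5 * 2 ^ n : ℕ) : ℤ)) := by
    have := Int.natAbs_dvd_natAbs.mp (show (5 : ℤ).natAbs ∣ _ from h)
    exact this
  have h2 : (5 : ℤ) ∣ ((5 * 2 ^ n : ℕ) : ℤ) := by push_cast; exact ⟨2 ^ n, by ring⟩
  have h3 : (5 : ℤ) ∣ 2 * (r : ℤ) := by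
    have := dvd_add h1 h2
    simpa using this
  have h4 : (5 : ℕ) ∣ 2 * r := by exact_mod_cast Int.natCast_dvd_natCast.mp (by push_cast at h3 ⊢; exact h3)
  omega

lemma half_coord {n r : ℕ} (hn : 1 ≤ n)
    (h : (0 : ℕ) = (2 * (r : ℤ) - ((5 * 2 ^ n : ℕ) : ℤ)).natAbs) : r = 5 * 2 ^ (n - 1) := by
  have h0 : 2 * (r : ℤ) - ((5 * 2 ^ n : ℕ) : ℤ) = 0 := Int.natAbs_eq_zero.mp h.symm
  have h1 : 2 * (r : ℤ) = 2 * (5 * 2 ^ (n - 1)) := by rw [← bsplit hn]; omega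
  have h2 : (r : ℤ) = ((5 * 2 ^ (n - 1) : ℕ) : ℤ) := by push_cast; linarith
  exact_mod_cast h2

lemma sp_step {n j c e : ℕ} (hj : 1 ≤ j) (hjn : j < n) (hsp : Sp n j c)
    (hce : c = (2 * (e : ℤ) - ((5 * 2 ^ n : ℕ) : ℤ)).natAbs) : Sp n (j + 1) e := by
  obtain ⟨m, hm, hc⟩ := hsp
  obtain ⟨t, ht⟩ : ∃ t, n - j = t + 1 := ⟨n - j - 1, by omega⟩
  have hn' : n = j + t + 1 := by omega
  have hnj1 : n - (j + 1) = t := by omega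
  have habs := Int.natAbs_eq (2 * (e : ℤ) - ((5 * 2 ^ n : ℕ) : ℤ))
  rw [← hce] at habs
  have hcz : (c : ℤ) = 5 * 2 ^ (t + 1) * m := by rw [hc, ht]; push_cast; ring
  have hB : ((5 * 2 ^ n : ℕ) : ℤ) = 5 * 2 ^ (j + t + 1) := by rw [hn']; push_cast; ring
  obtain ⟨u, hu⟩ : ∃ u, j = u + 1 := ⟨j - 1, by omega⟩
  have hevj : Even (2 ^ j) := ⟨2 ^ u, by rw [hu]; ring⟩
  rcases habs with h | h
  · rw [hcz, hB] at h
    have h2e : 2 * (e : ℤ) = 2 * (5 * 2 ^ t * (2 ^ j + m)) := by linear_combination h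
    have he : (e : ℤ) = 5 * 2 ^ t * (2 ^ j + m) := by
      exact mul_left_cancel₀ two_ne_zero h2e
    have heN : e = 5 * 2 ^ t * (2 ^ j + m) := by exact_mod_cast he
    exact ⟨2 ^ j + m, hevj.add_odd hm, by rw [heN, hnj1]⟩
  · rw [hcz, hB] at h
    have hA : (0 : ℤ) < 5 * 2 ^ (t + 1) := by positivity
    have h1 : 5 * 2 ^ (t + 1) * (m : ℤ) ≤ 5 * 2 ^ (t + 1) * (2 ^ j : ℤ) := by
      have hr : 5 * 2 ^ (t + 1) * ((2:ℤ) ^ j) = 5 * 2 ^ (j + t + 1) := by ring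
      rw [hr]
      have he0 : (0 : ℤ) ≤ (e : ℤ) := Int.natCast_nonneg e
      linarith
    have hle : m ≤ 2 ^ j := by exact_mod_cast le_of_mul_le_mul_left h1 hA
    have hne : m ≠ 2 ^ j := by
      intro hEq
      rw [Nat.odd_iff] at hm
      obtain ⟨u, hu⟩ := hevj
      omega
    have h2e : 2 * (e : ℤ) = 2 * (5 * 2 ^ t * (2 ^ j - m)) := by linear_combination h
    have he : (e : ℤ) = 5 * 2 ^ t * ((2 ^ j : ℤ) - m) := mul_left_cancel₀ two_ne_zero h2e
    have heN : e = 5 * 2 ^ t * (2 ^ j - m) := by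
      have : ((5 * 2 ^ t * (2 ^ j - m) : ℕ) : ℤ) = 5 * 2 ^ t * ((2 ^ j : ℤ) - m) := by
        push_cast [hle]; ring
      exact_mod_cast he.trans this.symm
    exact ⟨2 ^ j - m, Nat.Even.sub_odd hle hevj hm, by rw [heN, hnj1]⟩

lemma y_step {n w z e : ℕ} (hw : 1 ≤ w) (hwn : w < n) (hz : Odd z) (h5 : ¬ 5 ∣ z)
    (hce : 2 ^ w * z = (2 * (e : ℤ) - ((5 * 2 ^ n : ℕ) : ℤ)).natAbs) :
    ∃ z', Odd z' ∧ ¬ 5 ∣ z' ∧ e = 2 ^ (w - 1) * z' := by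
  obtain ⟨t, htw⟩ : ∃ t, w = t + 1 := ⟨w - 1, by omega⟩
  obtain ⟨s, hsn⟩ : ∃ s, n - w = s + 1 := ⟨n - w - 1, by omega⟩
  have hn' : n = t + 1 + (s + 1) := by omega
  have hw1 : w - 1 = t := by omega
  have habs := Int.natAbs_eq (2 * (e : ℤ) - ((5 * 2 ^ n : ℕ) : ℤ))
  rw [← hce] at habs
  have hcz : ((2 ^ w * z : ℕ) : ℤ) = 2 ^ (t + 1) * z := by rw [htw]; push_cast; ring
  have hB : ((5 * 2 ^ n : ℕ) : ℤ) = 5 * 2 ^ (t + 1 + (s + 1)) := by rw [hn']; push_cast; ring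
  have hev : Even (5 * 2 ^ (s + 1)) := ⟨5 * 2 ^ s, by ring⟩
  rcases habs with h | h
  · rw [hcz, hB] at h
    have h2e : 2 * (e : ℤ) = 2 * (2 ^ t * (5 * 2 ^ (s + 1) + z)) := by linear_combination h
    have he : (e : ℤ) = 2 ^ t * (5 * 2 ^ (s + 1) + z) := mul_left_cancel₀ two_ne_zero h2e
    have heN : e = 2 ^ t * (5 * 2 ^ (s + 1) + z) := by exact_mod_cast he
    refine ⟨5 * 2 ^ (s + 1) + z, hev.add_odd hz, ?_, by rw [heN, hw1]⟩
    intro hdvd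
    have : (5 : ℕ) ∣ 5 * 2 ^ (s + 1) := ⟨2 ^ (s + 1), rfl⟩
    exact h5 ((Nat.dvd_add_right this).mp hdvd)
  · rw [hcz, hB] at h
    have hA : (0 : ℤ) < 2 ^ (t + 1) := by positivity
    have h1 : 2 ^ (t + 1) * (z : ℤ) ≤ 2 ^ (t + 1) * ((5 * 2 ^ (s + 1) : ℕ) : ℤ) := by
      have hr : (2:ℤ) ^ (t + 1) * ((5 * 2 ^ (s + 1) : ℕ) : ℤ) = 5 * 2 ^ (t + 1 + (s + 1)) := by
        push_cast; ring
      rw [hr]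
      have he0 : (0 : ℤ) ≤ (e : ℤ) := Int.natCast_nonneg e
      linarith
    have hle : z ≤ 5 * 2 ^ (s + 1) := by exact_mod_cast le_of_mul_le_mul_left h1 hA
    have h2e : 2 * (e : ℤ) = 2 * (2 ^ t * (5 * 2 ^ (s + 1) - z)) := by linear_combination h
    have he : (e : ℤ) = 2 ^ t * (5 * 2 ^ (s + 1) - (z : ℤ)) := mul_left_cancel₀ two_ne_zero h2e
    have heN : e = 2 ^ t * (5 * 2 ^ (s + 1) - z) := by
      have hcast : ((2 ^ t * (5 * 2 ^ (s + 1) - z) : ℕ) : ℤ)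
          = 2 ^ t * (5 * 2 ^ (s + 1) - (z : ℤ)) := by push_cast [hle]; ring
      exact_mod_cast he.trans hcast.symm
    refine ⟨5 * 2 ^ (s + 1) - z, Nat.Even.sub_odd hle hev hz, ?_, by rw [heN, hw1]⟩
    intro hdvd
    have h5s : (5 : ℕ) ∣ 5 * 2 ^ (s + 1) := ⟨2 ^ (s + 1), rfl⟩
    have : (5 : ℕ) ∣ z := by
      have := Nat.dvd_sub h5s hdvd
      rwa [Nat.sub_sub_self hle] at this
    exact h5 this

lemma sp_compl {n i s : ℕ} (hi : 1 ≤ i) (hin : i ≤ n) (hsp : Sp n i s)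
    (hs : s < 5 * 2 ^ n) : Sp n i (5 * 2 ^ n - s) := by
  obtain ⟨m, hm, hrfl⟩ := hsp
  have hpow : (2 : ℕ) ^ n = 2 ^ (n - i) * 2 ^ i := by rw [← pow_add]; congr 1; omega
  have hmlt : m < 2 ^ i := by
    by_contra hc
    push_neg at hc
    have : 5 * 2 ^ n ≤ 5 * 2 ^ (n - i) * m := by
      calc 5 * 2 ^ n = 5 * 2 ^ (n - i) * 2 ^ i := by rw [hpow]; ring
      _ ≤ 5 * 2 ^ (n - i) * m := Nat.mul_le_mul_left _ hc
    omega
  obtain ⟨u, hu⟩ : ∃ u, i = u + 1 := ⟨i - 1, by omega⟩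
  have hevi : Even (2 ^ i) := ⟨2 ^ u, by rw [hu]; ring⟩
  refine ⟨2 ^ i - m, Nat.Even.sub_odd hmlt.le hevi hm, ?_⟩
  have h1 : s ≤ 5 * 2 ^ n := hs.le
  have hpz : (2 : ℤ) ^ n = 2 ^ (n - i) * 2 ^ i := by exact_mod_cast hpow
  zify [hmlt.le, h1]
  rw [hrfl]
  push_cast
  rw [hpz]
  ring

lemma pow4 {n : ℕ} (hn : 2 ≤ n) : 4 ≤ 2 ^ n := by
  calc (4 : ℕ) = 2 ^ 2 := rfl
  _ ≤ 2 ^ n := Nat.pow_le_pow_right (by norm_num) hn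

/-- Lemma E: a pair `(f, 0)` with `f` odd, `f ≠ b - 1` has no preimages. -/
lemma lemE {n : ℕ} (hn : 2 ≤ n) (L : ℕ) (f : ℕ) (p : ℕ × ℕ) (hf : Odd f)
    (hfb : f ≠ 5 * 2 ^ n - 1) (hp : IsDiffPair (5 * 2 ^ n) p)
    (hit : (Kpair (5 * 2 ^ n))^[L] p = (f, 0)) : L = 0 := by
  have h4 := pow4 hn
  have h1n : 1 ≤ n := by omega
  cases L with
  | zero => rfl
  | succ L =>
    exfalso
    rw [Function.iterate_succ_apply'] at hit
    set r := (Kpair (5 * 2 ^ n))^[L] p with hRdef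
    have hrd : IsDiffPair (5 * 2 ^ n) r := iterate_diff hp L
    have hr1b : r.1 ≤ 5 * 2 ^ n - 1 := hrd.2
    rcases Kpair_inv _ _ _ hit with ⟨_, hq⟩ | ⟨hr2, hr1, hq⟩ | ⟨_, hq⟩ | ⟨_, hq⟩
    · rw [Prod.mk.injEq] at hq; rw [Nat.odd_iff] at hf; omega
    · rcases hq with hq | hq <;> rw [Prod.mk.injEq] at hq
      · omega
      · omega
    · rcases hq with hq | hq <;> rw [Prod.mk.injEq] at hq
      · have hodd := odd_b2 h1n r.1
        rw [← hq.2] at hodd; rw [Nat.odd_iff] at hodd; omega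
      · have hodd := odd_b1 h1n r.1
        rw [← hq.2] at hodd; rw [Nat.odd_iff] at hodd; omega
    · rcases hq with hq | hq <;> rw [Prod.mk.injEq] at hq
      · have hev := even_out h1n r.1
        rw [← hq.1] at hev; rw [Nat.even_iff] at hev; rw [Nat.odd_iff] at hf; omega
      · have hev := even_out h1n r.2
        rw [← hq.1] at hev; rw [Nat.even_iff] at hev; rw [Nat.odd_iff] at hf; omega

/-- Lemma C: above a pair with both coordinates divisible by 5, one of which is
special of level `j`, chains have length at most `n - j`. -/
lemma lemC {n : ℕ} (hn : 2 ≤ n) :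
    ∀ L : ℕ, ∀ q : ℕ × ℕ, ∀ j : ℕ, ∀ p : ℕ × ℕ, 1 ≤ j → j ≤ n →
      5 ∣ q.1 → 5 ∣ q.2 → (Sp n j q.1 ∨ Sp n j q.2) →
      IsDiffPair (5 * 2 ^ n) p → (Kpair (5 * 2 ^ n))^[L] p = q → L ≤ n - j := by
  intro L
  induction L with
  | zero => intro _ _ _ _ _ _ _ _ _ _; exact Nat.zero_le _
  | succ L IH =>
    intro q j p hj1 hjn h51 h52 hsp hp hit
    have h4 := pow4 hn
    have h1n : 1 ≤ n := by omega
    rw [Function.iterate_succ_apply'] at hit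
    set r := (Kpair (5 * 2 ^ n))^[L] p with hRdef
    have hrd : IsDiffPair (5 * 2 ^ n) r := iterate_diff hp L
    have hr1b : r.1 ≤ 5 * 2 ^ n - 1 := hrd.2
    rcases Kpair_inv _ _ _ hit with ⟨_, hq⟩ | ⟨hr2, hr1, hq⟩ | ⟨_, hq⟩ | ⟨_, hq⟩
    · exfalso
      rcases hsp with h | h <;> rw [hq] at h <;> exact absurd (sp_pos h) (by simp)
    · exfalso
      have hsum : q.1 + q.2 = 5 * 2 ^ n - 1 := by
        rcases hq with hq | hq <;> rw [hq] <;> dsimp only <;> omega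
      have h5 : (5 : ℕ) ∣ 5 * 2 ^ n - 1 := hsum ▸ Nat.dvd_add h51 h52
      omega
    · exfalso
      have hA : (5 : ℤ) ∣ (2 * (r.1 : ℤ) - (((5 * 2 ^ n : ℕ) : ℤ) - 1)) ∧
          (5 : ℤ) ∣ (2 * (r.1 : ℤ) - (((5 * 2 ^ n : ℕ) : ℤ) + 1)) := by
        rcases hq with hq | hq <;> rw [hq] at h51 h52 <;> dsimp only at h51 h52
        · exact ⟨Int.natAbs_dvd_natAbs.mp h51, Int.natAbs_dvd_natAbs.mp h52⟩
        · exact ⟨Int.natAbs_dvd_natAbs.mp h52, Int.natAbs_dvd_natAbs.mp h51⟩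
      have h2 : (5 : ℤ) ∣ 2 := by
        have := dvd_sub hA.1 hA.2
        simpa using this
      norm_num at h2
    · by_cases hje : j = n
      · exfalso
        have bad : ∀ e : ℕ, Sp n n ((2 * (e : ℤ) - ((5 * 2 ^ n : ℕ) : ℤ)).natAbs) → False := by
          intro e h
          have ho := sp_odd h
          have he := even_out h1n e
          rw [Nat.odd_iff] at ho; rw [Nat.even_iff] at he; omega
        rw [hje] at hsp
        rcases hsp with h | h <;> rcases hq with hq | hq <;> rw [hq] at h <;>
          dsimp only at h <;> exact bad _ h
      · have hjn2 : j < n := by omega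
        rcases hq with hq | hq
        · have e1 : q.1 = (2 * (r.1 : ℤ) - ((5 * 2 ^ n : ℕ) : ℤ)).natAbs := by rw [hq]
          have e2 : q.2 = (2 * (r.2 : ℤ) - ((5 * 2 ^ n : ℕ) : ℤ)).natAbs := by rw [hq]
          have h5r1 : 5 ∣ r.1 := five_dvd_of (e1 ▸ h51)
          have h5r2 : 5 ∣ r.2 := five_dvd_of (e2 ▸ h52)
          have hspr : Sp n (j + 1) r.1 ∨ Sp n (j + 1) r.2 := by
            rcases hsp with h | h
            · exact Or.inl (sp_step hj1 hjn2 h e1)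
            · exact Or.inr (sp_step hj1 hjn2 h e2)
          have := IH r (j + 1) p (by omega) (by omega) h5r1 h5r2 hspr hp hRdef.symm
          omega
        · have e1 : q.1 = (2 * (r.2 : ℤ) - ((5 * 2 ^ n : ℕ) : ℤ)).natAbs := by rw [hq]
          have e2 : q.2 = (2 * (r.1 : ℤ) - ((5 * 2 ^ n : ℕ) : ℤ)).natAbs := by rw [hq]
          have h5r2 : 5 ∣ r.2 := five_dvd_of (e1 ▸ h51)
          have h5r1 : 5 ∣ r.1 := five_dvd_of (e2 ▸ h52)
          have hspr : Sp n (j + 1) r.1 ∨ Sp n (j + 1) r.2 := by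
            rcases hsp with h | h
            · exact Or.inr (sp_step hj1 hjn2 h e1)
            · exact Or.inl (sp_step hj1 hjn2 h e2)
          have := IH r (j + 1) p (by omega) (by omega) h5r1 h5r2 hspr hp hRdef.symm
          omega

/-- Lemma B: above a pair `(e, 0)` with `e` special of level `k`, chains have
length at most `n - k`. -/
lemma lemB {n : ℕ} (hn : 2 ≤ n) (L : ℕ) (e k : ℕ) (p : ℕ × ℕ) (hk1 : 1 ≤ k)
    (hkn : k ≤ n) (hsp : Sp n k e) (hp : IsDiffPair (5 * 2 ^ n) p)
    (hit : (Kpair (5 * 2 ^ n))^[L] p = (e, 0)) : L ≤ n - k := by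
  have h4 := pow4 hn
  have h1n : 1 ≤ n := by omega
  cases L with
  | zero => exact Nat.zero_le _
  | succ L =>
    rw [Function.iterate_succ_apply'] at hit
    set r := (Kpair (5 * 2 ^ n))^[L] p with hRdef
    have hrd : IsDiffPair (5 * 2 ^ n) r := iterate_diff hp L
    have hr1b : r.1 ≤ 5 * 2 ^ n - 1 := hrd.2
    rcases Kpair_inv _ _ _ hit with ⟨_, hq⟩ | ⟨hr2, hr1, hq⟩ | ⟨_, hq⟩ | ⟨_, hq⟩
    · exfalso; rw [Prod.mk.injEq] at hq; have := sp_pos hsp; omega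
    · exfalso
      rcases hq with hq | hq <;> rw [Prod.mk.injEq] at hq
      · omega
      · have h5 := sp_five hsp; omega
    · exfalso
      rcases hq with hq | hq <;> rw [Prod.mk.injEq] at hq
      · have hodd := odd_b2 h1n r.1
        rw [← hq.2] at hodd; rw [Nat.odd_iff] at hodd; omega
      · have hodd := odd_b1 h1n r.1
        rw [← hq.2] at hodd; rw [Nat.odd_iff] at hodd; omega
    · rcases Nat.lt_or_ge k n with hkn2 | hkn2
      · rcases hq with hq | hq <;> rw [Prod.mk.injEq] at hq
        · have hhalf : r.2 = 5 * 2 ^ (n - 1) := half_coord h1n hq.2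
          have hsp1 : Sp n (k + 1) r.1 := sp_step hk1 hkn2 hsp hq.1
          have h5r1 : 5 ∣ r.1 := five_dvd_of (hq.1 ▸ sp_five hsp)
          have h5r2 : 5 ∣ r.2 := by rw [hhalf]; exact ⟨2 ^ (n - 1), by ring⟩
          have := lemC hn L r (k + 1) p (by omega) (by omega) h5r1 h5r2
            (Or.inl hsp1) hp hRdef.symm
          omega
        · have hhalf : r.1 = 5 * 2 ^ (n - 1) := half_coord h1n hq.2
          have hsp1 : Sp n (k + 1) r.2 := sp_step hk1 hkn2 hsp hq.1
          have h5r2 : 5 ∣ r.2 := five_dvd_of (hq.1 ▸ sp_five hsp)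
          have h5r1 : 5 ∣ r.1 := by rw [hhalf]; exact ⟨2 ^ (n - 1), by ring⟩
          have := lemC hn L r (k + 1) p (by omega) (by omega) h5r1 h5r2
            (Or.inr hsp1) hp hRdef.symm
          omega
      · exfalso
        have hkn' : k = n := by omega
        subst hkn'
        have ho := sp_odd hsp
        rcases hq with hq | hq <;> rw [Prod.mk.injEq] at hq
        · have hev := even_out h1n r.1
          rw [← hq.1] at hev; rw [Nat.even_iff] at hev; rw [Nat.odd_iff] at ho; omega
        · have hev := even_out h1n r.2
          rw [← hq.1] at hev; rw [Nat.even_iff] at hev; rw [Nat.odd_iff] at ho; omega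

/-- helper for the type-(a) step in Lemma D. -/
lemma stepA {n i w z rs ry : ℕ} (hi1 : 1 ≤ i) (hin : i < n) (hn1 : 1 ≤ n)
    (hiw : i + w ≤ n - 1) (hz : Odd z) (h5z : ¬ 5 ∣ z)
    (hs : Sp n i ((2 * (rs : ℤ) - ((5 * 2 ^ n : ℕ) : ℤ)).natAbs))
    (hy : 2 ^ w * z = (2 * (ry : ℤ) - ((5 * 2 ^ n : ℕ) : ℤ)).natAbs) :
    ∃ z', Odd z' ∧ ¬ 5 ∣ z' ∧ Sp n (i + 1) rs ∧ ry = 2 ^ (w - 1) * z' ∧ 1 ≤ w := by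
  have hw1 : 1 ≤ w := by
    rcases Nat.eq_zero_or_pos w with h0 | h0
    · exfalso
      subst h0
      rw [pow_zero, one_mul] at hy
      have hev := even_out hn1 ry
      rw [← hy] at hev
      rw [Nat.even_iff] at hev; rw [Nat.odd_iff] at hz; omega
    · exact h0
  have hwn : w < n := by omega
  obtain ⟨z', hz', h5z', hry⟩ := y_step hw1 hwn hz h5z hy
  exact ⟨z', hz', h5z', sp_step hi1 hin hs rfl, hry, hw1⟩

/-- Lemma D: mixed pairs (one special coordinate of level `i`, other coordinate
`2^w·z` with `z` odd not divisible by 5, `i + w ≤ n - 1`). -/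
lemma lemD {n : ℕ} (hn : 2 ≤ n) :
    ∀ L : ℕ, ∀ q : ℕ × ℕ, ∀ i w z : ℕ, ∀ p : ℕ × ℕ, 1 ≤ i → i + w ≤ n - 1 →
      Odd z → ¬ 5 ∣ z →
      ((Sp n i q.1 ∧ q.2 = 2 ^ w * z) ∨ (Sp n i q.2 ∧ q.1 = 2 ^ w * z)) →
      IsDiffPair (5 * 2 ^ n) p → (Kpair (5 * 2 ^ n))^[L] p = q → L ≤ n - i + 1 := by
  intro L
  induction L with
  | zero => intro _ _ _ _ _ _ _ _ _ _ _ _; exact Nat.zero_le _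
  | succ L IH =>
    intro q i w z p hi1 hiw hz h5z hmix hp hit
    have h4 := pow4 hn
    have h1n : 1 ≤ n := by omega
    have hin : i < n := by omega
    rw [Function.iterate_succ_apply'] at hit
    set r := (Kpair (5 * 2 ^ n))^[L] p with hRdef
    have hrd : IsDiffPair (5 * 2 ^ n) r := iterate_diff hp L
    have hr1b : r.1 ≤ 5 * 2 ^ n - 1 := hrd.2
    rcases Kpair_inv _ _ _ hit with ⟨_, hq⟩ | ⟨hr2, hr1, hq⟩ | ⟨_, hq⟩ | ⟨_, hq⟩
    · exfalso
      rcases hmix with ⟨h, _⟩ | ⟨h, _⟩ <;> rw [hq] at h <;> exact absurd (sp_pos h) (by simp)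
    · -- type (c) preimage
      have hre : r = (r.1, 0) := by rw [← hr2]
      have caseA : Sp n i (r.1 - 1) → L + 1 ≤ n - i + 1 := by
        intro hsA
        have hse := sp_even hin hsA
        have h5s := sp_five hsA
        have hodd : Odd r.1 := by
          rw [Nat.even_iff] at hse; rw [Nat.odd_iff]; omega
        have hne : r.1 ≠ 5 * 2 ^ n - 1 := by intro hEq; omega
        have hL := lemE hn L r.1 p hodd hne hp (hRdef.symm.trans hre)
        omega
      have caseB : Sp n i (5 * 2 ^ n - r.1) → L + 1 ≤ n - i + 1 := by
        intro hsB
        have hr1le : r.1 ≤ 5 * 2 ^ n := by omega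
        have hspr : Sp n i r.1 := by
          have := sp_compl hi1 hin.le hsB (by omega)
          rwa [Nat.sub_sub_self hr1le] at this
        have hL := lemB hn L r.1 i p hi1 hin.le hspr hp (hRdef.symm.trans hre)
        omega
      rcases hmix with ⟨hs, _⟩ | ⟨hs, _⟩ <;> rcases hq with hq | hq <;>
        rw [hq] at hs <;> dsimp only at hs <;>
        first
          | exact caseA hs
          | exact caseB hs
    · -- type (b) preimage: impossible, special coordinate is even
      exfalso
      have caseodd : ∀ c : ℕ, Odd c → Sp n i c → False := by
        intro c hc hspc
        have := sp_even hin hspc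
        rw [Nat.even_iff] at this; rw [Nat.odd_iff] at hc; omega
      rcases hmix with ⟨hs, _⟩ | ⟨hs, _⟩ <;> rcases hq with hq | hq <;>
        rw [hq] at hs <;> dsimp only at hs <;>
        first
          | exact caseodd _ (odd_b1 h1n r.1) hs
          | exact caseodd _ (odd_b2 h1n r.1) hs
    · -- type (a) preimage
      rcases hmix with ⟨hs, hy⟩ | ⟨hs, hy⟩ <;> rcases hq with hq | hq
      · have e1 : q.1 = (2 * (r.1 : ℤ) - ((5 * 2 ^ n : ℕ) : ℤ)).natAbs := by rw [hq]
        have e2 : q.2 = (2 * (r.2 : ℤ) - ((5 * 2 ^ n : ℕ) : ℤ)).natAbs := by rw [hq]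
        rw [e1] at hs
        obtain ⟨z', hz', h5z', hsR, hry, hw1⟩ :=
          stepA hi1 hin h1n hiw hz h5z hs (hy.symm.trans e2)
        have := IH r (i + 1) (w - 1) z' p (by omega) (by omega) hz' h5z'
          (Or.inl ⟨hsR, hry⟩) hp hRdef.symm
        omega
      · have e1 : q.1 = (2 * (r.2 : ℤ) - ((5 * 2 ^ n : ℕ) : ℤ)).natAbs := by rw [hq]
        have e2 : q.2 = (2 * (r.1 : ℤ) - ((5 * 2 ^ n : ℕ) : ℤ)).natAbs := by rw [hq]
        rw [e1] at hs
        obtain ⟨z', hz', h5z', hsR, hry, hw1⟩ :=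
          stepA hi1 hin h1n hiw hz h5z hs (hy.symm.trans e2)
        have := IH r (i + 1) (w - 1) z' p (by omega) (by omega) hz' h5z'
          (Or.inr ⟨hsR, hry⟩) hp hRdef.symm
        omega
      · have e1 : q.1 = (2 * (r.1 : ℤ) - ((5 * 2 ^ n : ℕ) : ℤ)).natAbs := by rw [hq]
        have e2 : q.2 = (2 * (r.2 : ℤ) - ((5 * 2 ^ n : ℕ) : ℤ)).natAbs := by rw [hq]
        rw [e2] at hs
        obtain ⟨z', hz', h5z', hsR, hry, hw1⟩ :=
          stepA hi1 hin h1n hiw hz h5z hs (hy.symm.trans e1)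
        have := IH r (i + 1) (w - 1) z' p (by omega) (by omega) hz' h5z'
          (Or.inr ⟨hsR, hry⟩) hp hRdef.symm
        omega
      · have e1 : q.1 = (2 * (r.2 : ℤ) - ((5 * 2 ^ n : ℕ) : ℤ)).natAbs := by rw [hq]
        have e2 : q.2 = (2 * (r.1 : ℤ) - ((5 * 2 ^ n : ℕ) : ℤ)).natAbs := by rw [hq]
        rw [e2] at hs
        obtain ⟨z', hz', h5z', hsR, hry, hw1⟩ :=
          stepA hi1 hin h1n hiw hz h5z hs (hy.symm.trans e1)
        have := IH r (i + 1) (w - 1) z' p (by omega) (by omega) hz' h5z'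
          (Or.inl ⟨hsR, hry⟩) hp hRdef.symm
        omega

end KapAux

open KapAux in
theorem kaprekar_above_type_c' (n x u v L : ℕ) (hn : 2 ≤ n)
    (hx1 : 1 ≤ x) (hx : x ≤ 5 * 2 ^ n - 1) (hnd : ¬ 2 ^ n ∣ x)
    (huv : IsDiffPair (5 * 2 ^ n) (u, v))
    (hK : (Kpair (5 * 2 ^ n))^[L] (u, v) = (x, 0)) :
    L ≤ n + 1 := by
  have h4 := pow4 hn
  have h1n : 1 ≤ n := by omega
  cases L with
  | zero => omega
  | succ L =>
    rw [Function.iterate_succ_apply'] at hK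
    set r := (Kpair (5 * 2 ^ n))^[L] (u, v) with hRdef
    have hrd : IsDiffPair (5 * 2 ^ n) r := iterate_diff huv L
    have hr1b : r.1 ≤ 5 * 2 ^ n - 1 := hrd.2
    rcases Kpair_inv _ _ _ hK with ⟨_, hq⟩ | ⟨hr2, hr1, hq⟩ | ⟨_, hq⟩ | ⟨_, hq⟩
    · exfalso; rw [Prod.mk.injEq] at hq; omega
    · rcases hq with hq | hq <;> rw [Prod.mk.injEq] at hq
      · exfalso; omega
      · have hre : r = (1, 0) := by
          have h1 : r.1 = 1 := by omega
          rw [← hr2, ← h1]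
        have hL := lemE hn L 1 (u, v) ⟨0, rfl⟩ (by omega) huv (hRdef.symm.trans hre)
        omega
    · exfalso
      rcases hq with hq | hq <;> rw [Prod.mk.injEq] at hq
      · have hodd := odd_b2 h1n r.1
        rw [← hq.2] at hodd; rw [Nat.odd_iff] at hodd; omega
      · have hodd := odd_b1 h1n r.1
        rw [← hq.2] at hodd; rw [Nat.odd_iff] at hodd; omega
    · rcases hq with hq | hq <;> rw [Prod.mk.injEq] at hq
      · -- x = |2 r.1 - b|, 0 = |2 r.2 - b|
        have hhalf : r.2 = 5 * 2 ^ (n - 1) := half_coord h1n hq.2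
        have hsp1 : Sp n 1 r.2 := ⟨1, Nat.odd_iff.mpr rfl, by rw [hhalf, mul_one]⟩
        by_cases h5x : 5 ∣ x
        · have h5r1 : 5 ∣ r.1 := five_dvd_of (hq.1 ▸ h5x)
          have h5r2 : 5 ∣ r.2 := by rw [hhalf]; exact ⟨2 ^ (n - 1), by ring⟩
          have := lemC hn L r 1 (u, v) le_rfl (by omega) h5r1 h5r2
            (Or.inr hsp1) huv hRdef.symm
          omega
        · obtain ⟨a, z0, hz0, hxeq⟩ := Nat.exists_eq_two_pow_mul_odd (show x ≠ 0 by omega)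
          have hxe : Even x := by
            have := even_out h1n r.1; rw [← hq.1] at this; exact this
          have ha1 : 1 ≤ a := by
            rcases Nat.eq_zero_or_pos a with h0 | h0
            · exfalso
              subst h0
              rw [pow_zero, one_mul] at hxeq
              rw [Nat.even_iff] at hxe; rw [Nat.odd_iff] at hz0; omega
            · exact h0
          have han : a ≤ n - 1 := by
            by_contra hc
            push_neg at hc
            exact hnd (by rw [hxeq]; exact (pow_dvd_pow 2 (by omega)).mul_right z0)
          have h5z0 : ¬ 5 ∣ z0 := fun h => h5x (by rw [hxeq]; exact h.mul_left (2 ^ a))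
          have hyE : 2 ^ a * z0 = (2 * (r.1 : ℤ) - ((5 * 2 ^ n : ℕ) : ℤ)).natAbs := by
            rw [← hxeq]; exact hq.1
          obtain ⟨z', hz', h5z', hry⟩ := y_step ha1 (by omega) hz0 h5z0 hyE
          have := lemD hn L r 1 (a - 1) z' (u, v) le_rfl (by omega) hz' h5z'
            (Or.inr ⟨hsp1, hry⟩) huv hRdef.symm
          omega
      · have hhalf : r.1 = 5 * 2 ^ (n - 1) := half_coord h1n hq.2
        have hsp1 : Sp n 1 r.1 := ⟨1, Nat.odd_iff.mpr rfl, by rw [hhalf, mul_one]⟩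
        by_cases h5x : 5 ∣ x
        · have h5r2 : 5 ∣ r.2 := five_dvd_of (hq.1 ▸ h5x)
          have h5r1 : 5 ∣ r.1 := by rw [hhalf]; exact ⟨2 ^ (n - 1), by ring⟩
          have := lemC hn L r 1 (u, v) le_rfl (by omega) h5r1 h5r2
            (Or.inl hsp1) huv hRdef.symm
          omega
        · obtain ⟨a, z0, hz0, hxeq⟩ := Nat.exists_eq_two_pow_mul_odd (show x ≠ 0 by omega)
          have hxe : Even x := by
            have := even_out h1n r.2; rw [← hq.1] at this; exact this
          have ha1 : 1 ≤ a := by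
            rcases Nat.eq_zero_or_pos a with h0 | h0
            · exfalso
              subst h0
              rw [pow_zero, one_mul] at hxeq
              rw [Nat.even_iff] at hxe; rw [Nat.odd_iff] at hz0; omega
            · exact h0
          have han : a ≤ n - 1 := by
            by_contra hc
            push_neg at hc
            exact hnd (by rw [hxeq]; exact (pow_dvd_pow 2 (by omega)).mul_right z0)
          have h5z0 : ¬ 5 ∣ z0 := fun h => h5x (by rw [hxeq]; exact h.mul_left (2 ^ a))
          have hyE : 2 ^ a * z0 = (2 * (r.2 : ℤ) - ((5 * 2 ^ n : ℕ) : ℤ)).natAbs := by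
            rw [← hxeq]; exact hq.1
          obtain ⟨z', hz', h5z', hry⟩ := y_step ha1 (by omega) hz0 h5z0 hyE
          have := lemD hn L r 1 (a - 1) z' (u, v) le_rfl (by omega) hz' h5z'
            (Or.inl ⟨hsp1, hry⟩) huv hRdef.symm
          omega

/-- chains above a type-(c) pair `(x, 0)` with `2^n ∤ x` have
length at most `n + 1` when `b = 5·2^n`. -/
theorem kaprekar_above_type_c (n b x u v L : ℕ) (hn : 2 ≤ n)
    (hb : b = 5 * 2 ^ n) (hx1 : 1 ≤ x) (hx : x ≤ b - 1) (hnd : ¬ 2 ^ n ∣ x)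
    (huv : IsDiffPair b (u, v)) (hK : (Kpair b)^[L] (u, v) = (x, 0)) :
    L ≤ n + 1 := by
  subst hb
  exact kaprekar_above_type_c' n x u v L hn hx1 hx hnd huv hK
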